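/- Let 𝒢₀ = (G₀, m, φ, τ) be a Γ-gain framework with V₀ nonempty and X nonzero. Then the linear span of the joint spectral χ-symmetric vectors for 𝒢₀ equals the translation space Z_{𝒢₀}, i.e. the space of all f ∈ ℓ∞(Γ, X^{V₀}) for which there exists a ∈ X with f(γ) = (a,…,a) for all γ ∈ Γ. -/

import Mathlib

/-- A character of the discrete abelian group `Γ`. -/
def IsChar {Γ : Type*} [AddCommGroup Γ] (χ : Γ → ℂ) : Prop :=
  (∀ γ γ' : Γ, χ (γ + γ') = χ γ * χ γ') ∧ ∀ γ : Γ, ‖χ γ‖ = 1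

/-- The `χ`-symmetric vector `z(χ, a) = T_τ̃ (χ⊗a)`,
 i.e. `z(χ,a)(γ)_v = χ(γ) dτ(γ) a_v`. -/
def chiSymVec {Γ X V₀ : Type*} [AddCommGroup Γ]
    [NormedAddCommGroup X] [InnerProductSpace ℂ X]
    (U : Γ → (X ≃ₗᵢ[ℂ] X)) (χ : Γ → ℂ) (a : V₀ → X) : Γ → V₀ → X :=
  fun γ v => U γ (χ γ • a v)

/-- The set of joint spectral `χ`-symmetric vectors for a gain framework with respect
to a generating tuple `γs`: vectors of the form `z(conj χ_λ, (a,…,a))` where `λ ∈ σ(T)`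
is a joint eigenvalue of `T = (dτ(γs 1), …, dτ(γs n))` with joint eigenvector `a` and
`χ_λ` is the associated character (`dτ(γ) a = χ_λ(γ) • a` for all `γ`). -/
def jointSpectralVectors {Γ X V₀ : Type*} [AddCommGroup Γ]
    [NormedAddCommGroup X] [InnerProductSpace ℂ X]
    (U : Γ → (X ≃ₗᵢ[ℂ] X)) {n : ℕ} (γs : Fin n → Γ) : Set (Γ → V₀ → X) :=
  {f | ∃ (lam : Fin n → ℂ) (a : X) (χlam : Γ → ℂ),
    a ≠ 0 ∧ (∀ j, U (γs j) a = lam j • a) ∧ IsChar χlam ∧ (∀ γ, U γ a = χlam γ • a) ∧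
    f = chiSymVec U (fun γ => (starRingEnd ℂ) (χlam γ)) (fun _ : V₀ => a)}

section Aux

universe u

/-- A finite commuting family of endomorphisms of a nonzero finite-dimensional
complex vector space has a common eigenvector. -/
private lemma exists_common_eigenvector :
    ∀ (n : ℕ) {V : Type u} [AddCommGroup V] [Module ℂ V] [FiniteDimensional ℂ V]
      [Nontrivial V] (f : Fin n → Module.End ℂ V),
      (∀ i j, Commute (f i) (f j)) →
      ∃ v : V, v ≠ 0 ∧ ∀ j, ∃ c : ℂ, f j v = c • v := by
  intro n
  induction n with
  | zero =>
    intro V _ _ _ _ f _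
    obtain ⟨v, hv⟩ := exists_ne (0 : V)
    exact ⟨v, hv, fun j => j.elim0⟩
  | succ n ih =>
    intro V _ _ _ _ f hcomm
    obtain ⟨μ, hμ⟩ := Module.End.exists_eigenvalue (f (Fin.last n))
    set E := Module.End.eigenspace (f (Fin.last n)) μ with hEdef
    haveI : Nontrivial E := Submodule.nontrivial_iff_ne_bot.mpr hμ
    have hinv : ∀ j : Fin n, ∀ x ∈ E, f j.castSucc x ∈ E := by
      intro j x hx
      rw [hEdef, Module.End.mem_eigenspace_iff] at hx ⊢
      have h := congrArg (fun g : Module.End ℂ V => g x) (hcomm (Fin.last n) j.castSucc)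
      simp only [Module.End.mul_apply] at h
      rw [h, hx, map_smul]
    obtain ⟨v, hv0, hv⟩ := ih (fun j => (f j.castSucc).restrict (hinv j))
      (fun i j => LinearMap.restrict_commute (hcomm _ _) _ _)
    refine ⟨(v : V), by simpa using hv0, ?_⟩
    intro j
    induction j using Fin.lastCases with
    | last =>
      exact ⟨μ, Module.End.mem_eigenspace_iff.mp v.2⟩
    | cast i =>
      obtain ⟨c, hc⟩ := hv i
      exact ⟨c, by simpa [LinearMap.restrict_apply] using congrArg Subtype.val hc⟩

/-- The joint eigenvectors of a commuting family of unitaries span the whole space. -/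
private lemma span_jointEigen_top {X : Type u} [NormedAddCommGroup X]
    [InnerProductSpace ℂ X] [FiniteDimensional ℂ X] [Nontrivial X]
    {n : ℕ} (W : Fin n → (X ≃ₗᵢ[ℂ] X))
    (hcomm : ∀ i j : Fin n, ∀ x : X, W i (W j x) = W j (W i x)) :
    Submodule.span ℂ {a : X | a ≠ 0 ∧ ∀ j, ∃ c : ℂ, W j a = c • a} = ⊤ := by
  by_contra hS
  set Ev : Set X := {a : X | a ≠ 0 ∧ ∀ j, ∃ c : ℂ, W j a = c • a} with hEv
  set S : Submodule ℂ X := Submodule.span ℂ Ev with hSdef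
  have hbot : Sᗮ ≠ ⊥ := fun h => hS (Submodule.orthogonal_eq_bot_iff.mp h)
  haveI : Nontrivial Sᗮ := Submodule.nontrivial_iff_ne_bot.mpr hbot
  have hsymmS : ∀ j, ∀ x ∈ S, (W j).symm x ∈ S := by
    intro j x hx
    induction hx using Submodule.span_induction with
    | mem a ha =>
      obtain ⟨ha0, haj⟩ := ha
      obtain ⟨c, hc⟩ := haj j
      have hc0 : c ≠ 0 := by
        intro h
        rw [h, zero_smul] at hc
        exact ha0 (by simpa using congrArg (W j).symm hc)
      have hsa : (W j).symm a = c⁻¹ • a := by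
        apply (W j).injective
        rw [(W j).apply_symm_apply, map_smul, hc, smul_smul, inv_mul_cancel₀ hc0, one_smul]
      rw [hsa]
      exact Submodule.smul_mem _ _ (Submodule.subset_span ⟨ha0, haj⟩)
    | zero => simpa using Submodule.zero_mem S
    | add x y hx hy ihx ihy => rw [map_add]; exact Submodule.add_mem _ ihx ihy
    | smul c x hx ihx => rw [map_smul]; exact Submodule.smul_mem _ _ ihx
  have hinvO : ∀ j, ∀ x ∈ (Sᗮ : Submodule ℂ X), W j x ∈ Sᗮ := by
    intro j x hx
    rw [Submodule.mem_orthogonal] at hx ⊢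
    intro u hu
    have h1 : (inner ℂ u (W j x) : ℂ) = inner ℂ ((W j).symm u) x := by
      conv_lhs => rw [← (W j).apply_symm_apply u]
      exact (W j).inner_map_map _ _
    rw [h1]
    exact hx _ (hsymmS j u hu)
  set f : Fin n → Module.End ℂ (Sᗮ : Submodule ℂ X) :=
    fun j => LinearMap.restrict ((W j).toLinearEquiv : X →ₗ[ℂ] X) (hinvO j) with hfdef
  have hcommW : ∀ i j : Fin n,
      Commute (((W i).toLinearEquiv : X →ₗ[ℂ] X)) (((W j).toLinearEquiv : X →ₗ[ℂ] X)) := by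
    intro i j
    apply LinearMap.ext
    intro x
    simpa using hcomm i j x
  have hcommf : ∀ i j, Commute (f i) (f j) :=
    fun i j => LinearMap.restrict_commute (hcommW i j) _ _
  obtain ⟨v, hv0, hv⟩ := exists_common_eigenvector n f hcommf
  have hvE : (v : X) ∈ Ev := by
    refine ⟨by simpa using hv0, fun j => ?_⟩
    obtain ⟨c, hc⟩ := hv j
    exact ⟨c, by simpa [hfdef, LinearMap.restrict_apply] using congrArg Subtype.val hc⟩
  have hvS : (v : X) ∈ S := Submodule.subset_span hvE
  have hvz : (v : X) = 0 := by
    have h0 : (v : X) ∈ S ⊓ Sᗮ := ⟨hvS, v.2⟩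
    rw [Submodule.inf_orthogonal_eq_bot] at h0
    simpa using h0
  exact hv0 (by simpa using hvz)

private lemma conj_mul_self_of_norm_one {z : ℂ} (hz : ‖z‖ = 1) :
    (starRingEnd ℂ) z * z = 1 := by
  rw [mul_comm, Complex.mul_conj, Complex.normSq_eq_norm_sq, hz]
  norm_num

end Aux

/-- the linear span of the joint spectral `χ`-symmetric vectors of a
`Γ`-gain framework equals the translation space `Z_{𝒢₀}`, the space of all
`f ∈ ℓ∞(Γ, X^{V₀})` that are constant with value a constant tuple `(a, …, a)`. -/
theorem span_jointSpectralVectors_eq_translationSpace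
    {Γ : Type*} [AddCommGroup Γ] [AddGroup.FG Γ]
    {X : Type*} [NormedAddCommGroup X] [InnerProductSpace ℂ X] [FiniteDimensional ℂ X]
    [Nontrivial X]
    {Y : Type*} [NormedAddCommGroup Y] [InnerProductSpace ℂ Y] [FiniteDimensional ℂ Y]
    {V₀ E₀ : Type*} [Fintype V₀] [Fintype E₀] [Nonempty V₀]
    (s r : E₀ → V₀) (m : E₀ → Γ) (φ : E₀ → (X →ₗ[ℂ] Y))
    (τ : Γ → (X ≃ᵃⁱ[ℂ] X))
    (hτ : ∀ γ γ' : Γ, ∀ x : X, τ (γ + γ') x = τ γ (τ γ' x))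
    (U : Γ → (X ≃ₗᵢ[ℂ] X)) (hU : ∀ γ x, U γ x = τ γ x - τ γ 0)
    {n : ℕ} (γs : Fin n → Γ)
    (hgen : ∀ γ : Γ, U γ ∈ Subgroup.closure (Set.range fun j => U (γs j))) :
    (Submodule.span ℂ (jointSpectralVectors U γs (V₀ := V₀)) : Set (Γ → V₀ → X)) =
      {f : Γ → V₀ → X | ∃ a : X, ∀ (γ : Γ) (v : V₀), f γ v = a} := by
  -- `U` is a homomorphism
  have key : ∀ γ (u w : X), U γ u - U γ w = τ γ u - τ γ w := by
    intro γ u w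
    rw [hU, hU]
    abel
  have hhom : ∀ γ γ' (x : X), U (γ + γ') x = U γ (U γ' x) := by
    intro γ γ' x
    have h1 : U (γ + γ') x = τ γ (τ γ' x) - τ γ (τ γ' 0) := by
      rw [hU, hτ, hτ]
    have h2 : U γ (U γ' x) = τ γ (τ γ' x) - τ γ (τ γ' 0) := by
      rw [hU γ' x, map_sub, key]
    rw [h1, h2]
  -- eigenvectors of the generators are eigenvectors of everything
  have hall : ∀ a : X, (∀ j, ∃ c : ℂ, U (γs j) a = c • a) →
      ∀ γ, ∃ c : ℂ, U γ a = c • a := by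
    intro a hja γ
    by_cases ha : a = 0
    · exact ⟨1, by simp [ha]⟩
    let H : Subgroup (X ≃ₗᵢ[ℂ] X) :=
      { carrier := {g | ∃ c : ℂ, g a = c • a}
        one_mem' := ⟨1, by simp⟩
        mul_mem' := by
          rintro g h ⟨c, hc⟩ ⟨d, hd⟩
          exact ⟨d * c, by
            simp only [LinearIsometryEquiv.coe_mul, Function.comp_apply, hd, map_smul, hc,
              smul_smul]⟩
        inv_mem' := by
          rintro g ⟨c, hc⟩
          have hc0 : c ≠ 0 := by
            intro h
            rw [h, zero_smul] at hc
            exact ha (by simpa using congrArg g.symm hc)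
          refine ⟨c⁻¹, ?_⟩
          apply g.injective
          rw [LinearIsometryEquiv.coe_inv]
          rw [g.apply_symm_apply, map_smul, hc, smul_smul, inv_mul_cancel₀ hc0, one_smul]
          }
    have hle : Subgroup.closure (Set.range fun j => U (γs j)) ≤ H :=
      (Subgroup.closure_le H).mpr (by rintro _ ⟨j, rfl⟩; exact hja j)
    exact hle (hgen γ)
  -- building the character
  have mkchar : ∀ b : X, b ≠ 0 → (∀ j, ∃ c : ℂ, U (γs j) b = c • b) →
      ∃ χ : Γ → ℂ, IsChar χ ∧ ∀ γ, U γ b = χ γ • b := by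
    intro b hb0 hjb
    choose χ hχ using hall b hjb
    have inj : ∀ c c' : ℂ, c • b = c' • b → c = c' := fun c c' h =>
      smul_left_injective ℂ hb0 h
    refine ⟨χ, ⟨?_, ?_⟩, hχ⟩
    · intro γ γ'
      apply inj
      rw [← hχ (γ + γ'), hhom γ γ' b, hχ γ', map_smul, hχ γ, smul_smul, mul_comm]
    · intro γ
      have h := congrArg norm (hχ γ)
      rw [(U γ).norm_map, norm_smul] at h
      have hb : ‖b‖ ≠ 0 := by simpa using hb0
      have : 1 * ‖b‖ = ‖χ γ‖ * ‖b‖ := by rw [one_mul]; exact h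
      exact (mul_right_cancel₀ hb this).symm
  -- the commuting family of generators
  have hcommW : ∀ i j : Fin n, ∀ x : X, U (γs i) (U (γs j) x) = U (γs j) (U (γs i) x) := by
    intro i j x
    rw [← hhom, ← hhom, add_comm]
  ext f
  simp only [SetLike.mem_coe, Set.mem_setOf_eq]
  constructor
  · -- forward: each spectral vector is a constant translation
    intro hf
    induction hf using Submodule.span_induction with
    | mem g hg =>
      obtain ⟨lam, a, χ, ha0, hja, hchar, hUa, rfl⟩ := hg
      refine ⟨a, fun γ v => ?_⟩
      have h1 : (starRingEnd ℂ) (χ γ) * χ γ = 1 := conj_mul_self_of_norm_one (hchar.2 γ)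
      simp only [chiSymVec, map_smul, hUa γ, smul_smul, h1, one_smul]
    | zero => exact ⟨0, fun γ v => rfl⟩
    | add x y hx hy ihx ihy =>
      obtain ⟨a, hax⟩ := ihx
      obtain ⟨b, hby⟩ := ihy
      exact ⟨a + b, fun γ v => by simp [Pi.add_apply, hax γ v, hby γ v]⟩
    | smul c x hx ihx =>
      obtain ⟨a, hax⟩ := ihx
      exact ⟨c • a, fun γ v => by simp [Pi.smul_apply, hax γ v]⟩
  · -- reverse: each translation lies in the span
    rintro ⟨a, hfa⟩
    have hfeq : f = fun _ _ => a := funext fun γ => funext fun v => hfa γ v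
    rw [hfeq]
    clear hfeq hfa
    have hatop : a ∈ Submodule.span ℂ
        {b : X | b ≠ 0 ∧ ∀ j, ∃ c : ℂ, U (γs j) b = c • b} := by
      rw [span_jointEigen_top (fun j => U (γs j)) hcommW]
      trivial
    induction hatop using Submodule.span_induction with
    | mem b hb =>
      obtain ⟨hb0, hjb⟩ := hb
      obtain ⟨χ, hchar, hUb⟩ := mkchar b hb0 hjb
      apply Submodule.subset_span
      refine ⟨fun j => χ (γs j), b, χ, hb0, fun j => hUb (γs j), hchar, hUb, ?_⟩
      funext γ v
      have h1 : (starRingEnd ℂ) (χ γ) * χ γ = 1 := conj_mul_self_of_norm_one (hchar.2 γ)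
      simp only [chiSymVec, map_smul, hUb γ, smul_smul, h1, one_smul]
    | zero =>
      exact Submodule.zero_mem _
    | add x y hx hy ihx ihy =>
      exact Submodule.add_mem _ ihx ihy
    | smul c x hx ihx =>
      exact Submodule.smul_mem _ _ ihx
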